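/- Let (F, G, η, ε) : C → X be an adjunction F ⊣ G, where C has pullbacks, such that every unit component η_C : C ⟶ GF(C) is a pullback stable epimorphism (i.e., the pullback of η_C along any morphism is again an epimorphism) and every counit component ε_X : FG(X) ⟶ X is an epimorphism. Then F is a weak fibration. -/

import Mathlib

open CategoryTheory Limits

/-- A morphism `e : A ⟶ B` is a pullback stable epimorphism if for every morphism
`u : X ⟶ B` the pullback projection `A ×_B X ⟶ X` of `e` along `u` is an epimorphism. -/
def IsStableEpi {C : Type*} [Category C] [HasPullbacks C] {A B : C} (e : A ⟶ B) : Prop :=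
  ∀ ⦃X : C⦄ (u : X ⟶ B), Epi (pullback.snd e u)

/-- A functor `F : C ⥤ X` is a weak fibration if for every object `c` of `C` and every
morphism `u : x ⟶ F c` there exist `f : U ⟶ c` in `C` and an epimorphism `φ : F U ⟶ x`
with `F f = φ ≫ u`. -/
def IsWeakFibration {C : Type*} [Category C] {X : Type*} [Category X] (F : C ⥤ X) : Prop :=
  ∀ (c : C) ⦃x : X⦄ (u : x ⟶ F.obj c), ∃ (U : C) (f : U ⟶ c) (φ : F.obj U ⟶ x),
    Epi φ ∧ F.map f = φ ≫ u

/-- If `(F, G, η, ε)` is an adjunction whose unit components are pullback stable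
epimorphisms and whose counit components are epimorphisms, then `F` is a weak fibration. -/
theorem isWeakFibration_of_adjunction {C : Type*} [Category C] {X : Type*} [Category X]
    [HasPullbacks C] (F : C ⥤ X) (G : X ⥤ C) (adj : F ⊣ G)
    (hη : ∀ c : C, IsStableEpi (adj.unit.app c))
    (hε : ∀ x : X, Epi (adj.counit.app x)) :
    IsWeakFibration F := by
  intro c x u
  refine ⟨pullback (adj.unit.app c) (G.map u), pullback.fst _ _,
    F.map (pullback.snd _ _) ≫ adj.counit.app x, ?_, ?_⟩
  · have := Functor.preservesEpimorphisms_of_adjunction adj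
    have h1 : Epi (pullback.snd (adj.unit.app c) (G.map u)) := hη c (G.map u)
    have h2 : Epi (F.map (pullback.snd (adj.unit.app c) (G.map u))) := F.map_epi _
    exact epi_comp _ _
  · have hsq := pullback.condition (f := adj.unit.app c) (g := G.map u)
    have := congrArg (fun t => F.map t ≫ adj.counit.app (F.obj c)) hsq
    simp only [Functor.map_comp, Category.assoc] at this
    erw [adj.left_triangle_components, adj.counit_naturality] at this
    simpa using this
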